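/- arXiv:0905.0215 — 2 statements merged into one kernel-verified Lean document; each statement's English description precedes it below -/
import Mathlib

section
/- The series ∑_{n=1}^∞ (-1)^{n-1} · n² · (n!)² / (2n)! converges and equals (4/125) · (5 − √5 · log((√5 + 1)/2)). -/
set_option maxHeartbeats 1000000
open MeasureTheory intervalIntegral Real

lemma beta_nat (k : ℕ) : ∫ x in (0:ℝ)..1, x ^ k * (1 - x) ^ k
    = (k.factorial : ℝ)^2 / ((2*k+1).factorial : ℝ) := by
  have h := Complex.Gamma_mul_Gamma_eq_betaIntegral (s := (k:ℂ)+1) (t := (k:ℂ)+1)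
    (by simp; positivity) (by simp; positivity)
  rw [Complex.Gamma_nat_eq_factorial] at h
  have h2 : ((k:ℂ)+1) + ((k:ℂ)+1) = ((2*k+1 : ℕ):ℂ) + 1 := by push_cast; ring
  rw [h2, Complex.Gamma_nat_eq_factorial] at h
  have hb : Complex.betaIntegral ((k:ℂ)+1) ((k:ℂ)+1)
      = ((∫ x in (0:ℝ)..1, x ^ k * (1 - x) ^ k : ℝ) : ℂ) := by
    rw [Complex.betaIntegral, ← intervalIntegral.integral_ofReal]
    refine intervalIntegral.integral_congr fun x hx => ?_
    rw [add_sub_cancel_right]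
    push_cast
    rw [Complex.cpow_natCast, Complex.cpow_natCast]
  rw [hb] at h
  have hfac : ((2*k+1).factorial : ℂ) ≠ 0 := by exact_mod_cast (Nat.factorial_pos _).ne'
  field_simp
  have := h.symm
  rw [mul_comm] at this
  have : ((∫ x in (0:ℝ)..1, x ^ k * (1 - x) ^ k : ℝ) : ℂ) * ((2*k+1).factorial : ℂ)
      = ((k.factorial:ℂ))^2 := by rw [mul_comm]; rw [← h]; ring
  exact_mod_cast this

lemma fact_bound (n : ℕ) : n.factorial ^ 2 * 2 ^ n ≤ (2*n).factorial := by
  induction n with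
  | zero => simp
  | succ n ih =>
    have h : 2*(n+1) = (2*n)+1+1 := by ring
    rw [h, Nat.factorial_succ, Nat.factorial_succ, Nat.factorial_succ]
    calc ((n+1) * n.factorial)^2 * 2^(n+1)
        = (2*(n+1)*(n+1)) * (n.factorial^2 * 2^n) := by ring
      _ ≤ (2*(n+1)*(n+1)) * (2*n).factorial := Nat.mul_le_mul_left _ ih
      _ ≤ ((2*n+1+1) * ((2*n+1) * (2*n).factorial)) := by
          rw [← mul_assoc]
          exact Nat.mul_le_mul_right _ (by nlinarith)

lemma choose3 (n : ℕ) : ((n+3).choose 3 : ℝ) = (n+1)*(n+2)*(n+3)/6 := by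
  have h0 := Nat.choose_mul_factorial_mul_factorial (show 3 ≤ n+3 by omega)
  have h2 : (n+3) - 3 = n := by omega
  rw [h2] at h0
  have h1 : ((n+3).choose 3 : ℝ) * 6 * (n.factorial : ℝ) = ((n+3).factorial : ℝ) := by
    exact_mod_cast h0
  have hf : ((n+3).factorial : ℝ) = (n+1)*(n+2)*(n+3) * n.factorial := by
    rw [show n+3 = n+1+1+1 by ring]
    rw [Nat.factorial_succ, Nat.factorial_succ, Nat.factorial_succ]
    push_cast; ring
  rw [hf] at h1
  have hn : (n.factorial : ℝ) ≠ 0 := by exact_mod_cast (Nat.factorial_pos _).ne'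
  have h3 := mul_right_cancel₀ hn h1
  linarith

lemma choose2 (n : ℕ) : ((n+2).choose 2 : ℝ) = (n+1)*(n+2)/2 := by
  have h0 := Nat.choose_mul_factorial_mul_factorial (show 2 ≤ n+2 by omega)
  have h2 : (n+2) - 2 = n := by omega
  rw [h2] at h0
  have h1 : ((n+2).choose 2 : ℝ) * 2 * (n.factorial : ℝ) = ((n+2).factorial : ℝ) := by
    exact_mod_cast h0
  have hf : ((n+2).factorial : ℝ) = (n+1)*(n+2) * n.factorial := by
    rw [show n+2 = n+1+1 by ring]
    rw [Nat.factorial_succ, Nat.factorial_succ]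
    push_cast; ring
  rw [hf] at h1
  have hn : (n.factorial : ℝ) ≠ 0 := by exact_mod_cast (Nat.factorial_pos _).ne'
  have h3 := mul_right_cancel₀ hn h1
  linarith


lemma pointwise {t : ℝ} (h1 : 0 ≤ t) (h2 : t ≤ 1) :
    HasSum (fun n : ℕ => (-1:ℝ)^n * ((n:ℝ)+1)^2 * (2*(n:ℝ)+3) * (t*(1-t))^(n+1))
      ((t - t^2) * (12/(1+t-t^2)^4 - 10/(1+t-t^2)^3 + 1/(1+t-t^2)^2)) := by
  set r : ℝ := t^2 - t with hrdef
  have hr : ‖r‖ < 1 := by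
    rw [Real.norm_eq_abs, abs_lt]
    constructor <;> nlinarith
  have h3 := hasSum_choose_mul_geometric_of_norm_lt_one (𝕜 := ℝ) 3 hr
  have h2' := hasSum_choose_mul_geometric_of_norm_lt_one (𝕜 := ℝ) 2 hr
  have h1' := hasSum_choose_mul_geometric_of_norm_lt_one (𝕜 := ℝ) 1 hr
  have comb := ((h3.mul_left 12).sub (h2'.mul_left 10)).add h1'
  have comb2 := comb.mul_left (t - t^2)
  have hfn : (fun n : ℕ => (-1:ℝ)^n * ((n:ℝ)+1)^2 * (2*(n:ℝ)+3) * (t*(1-t))^(n+1))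
      = fun n : ℕ => (t - t^2) * (12 * ((((n+3).choose 3 : ℕ):ℝ) * r^n)
          - 10 * ((((n+2).choose 2 : ℕ):ℝ) * r^n) + (((n+1).choose 1 : ℕ):ℝ) * r^n) := by
    funext n
    rw [choose3, choose2, Nat.choose_one_right]
    have e1 : (t*(1-t))^(n+1) = (t-t^2)*(t-t^2)^n := by ring
    have e2 : r^n = (-1:ℝ)^n * (t-t^2)^n := by
      rw [show r = (-1)*(t-t^2) by ring, mul_pow]
    rw [e1, e2]
    push_cast
    ring
  rw [hfn]
  convert comb2 using 1
  · exact rfl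
  have hw : (1:ℝ) - r = 1 + t - t^2 := by ring
  rw [← hw]
  ring

lemma ftc_eval : ∫ t in (0:ℝ)..1,
      (t - t^2) * (12/(1+t-t^2)^4 - 10/(1+t-t^2)^3 + 1/(1+t-t^2)^2)
    = 4/125 * (5 - Real.sqrt 5 * Real.log ((Real.sqrt 5 + 1)/2)) := by
  set s : ℝ := Real.sqrt 5 with hsdef
  have hs : s^2 = 5 := Real.sq_sqrt (by norm_num)
  have hs0 : (0:ℝ) ≤ s := Real.sqrt_nonneg 5
  have hs2 : (2:ℝ) < s := by nlinarith
  have hsne : s ≠ 0 := by positivity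
  set H : ℝ → ℝ := fun t => -(1/(25*s)) * (Real.log (t - (1-s)/2) - Real.log ((s+1)/2 - t))
      + (1-2*t) * (13/25/(1+t-t^2) - 7/5/(1+t-t^2)^2 + 4/5/(1+t-t^2)^3) with hHdef
  have hwpos : ∀ x ∈ Set.uIcc (0:ℝ) 1, (0:ℝ) < 1 + x - x^2 := by
    intro x hx
    rw [Set.uIcc_of_le (by norm_num)] at hx
    obtain ⟨hx0, hx1⟩ := hx
    nlinarith
  have hderiv : ∀ x ∈ Set.uIcc (0:ℝ) 1, HasDerivAt H
      ((x - x^2) * (12/(1+x-x^2)^4 - 10/(1+x-x^2)^3 + 1/(1+x-x^2)^2)) x := by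
    intro x hx
    have hw := hwpos x hx
    rw [Set.uIcc_of_le (by norm_num)] at hx
    obtain ⟨hx0, hx1⟩ := hx
    have ha : (0:ℝ) < x - (1-s)/2 := by nlinarith
    have hb : (0:ℝ) < (s+1)/2 - x := by nlinarith
    have d1 : HasDerivAt (fun t : ℝ => t - (1-s)/2) 1 x := (hasDerivAt_id x).sub_const _
    have d2 : HasDerivAt (fun t : ℝ => (s+1)/2 - t) (-1) x := by
      simpa using (hasDerivAt_id x).const_sub ((s+1)/2)
    have dl1 := d1.log ha.ne'
    have dl2 := d2.log hb.ne'
    have dw : HasDerivAt (fun t : ℝ => 1 + t - t^2) (1 - 2*x) x := by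
      have h := ((hasDerivAt_id x).const_add 1).sub (hasDerivAt_pow 2 x)
      have h' : HasDerivAt ((fun x : ℝ => 1 + x) - fun x => x ^ 2) (1 - 2 * x) x := by simpa using h
      exact h'
    have dq1 : HasDerivAt (fun t : ℝ => 13/25/(1+t-t^2))
        ((0 * (1+x-x^2) - 13/25 * (1-2*x)) / (1+x-x^2)^2) x :=
      (hasDerivAt_const x (13/25)).div dw hw.ne'
    have dw2 : HasDerivAt (fun t : ℝ => (1+t-t^2)^2) (2 * (1+x-x^2)^(2-1) * (1-2*x)) x := dw.pow 2
    have dw3 : HasDerivAt (fun t : ℝ => (1+t-t^2)^3) (3 * (1+x-x^2)^(3-1) * (1-2*x)) x := dw.pow 3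
    have dq2 : HasDerivAt (fun t : ℝ => 7/5/(1+t-t^2)^2)
        ((0 * (1+x-x^2)^2 - 7/5 * (2 * (1+x-x^2)^(2-1) * (1-2*x))) / ((1+x-x^2)^2)^2) x :=
      (hasDerivAt_const x (7/5)).div dw2 (pow_ne_zero _ hw.ne')
    have dq3 : HasDerivAt (fun t : ℝ => 4/5/(1+t-t^2)^3)
        ((0 * (1+x-x^2)^3 - 4/5 * (3 * (1+x-x^2)^(3-1) * (1-2*x))) / ((1+x-x^2)^3)^2) x :=
      (hasDerivAt_const x (4/5)).div dw3 (pow_ne_zero _ hw.ne')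
    have dq := (dq1.sub dq2).add dq3
    have dlin : HasDerivAt (fun t : ℝ => 1 - 2*t) (-2) x := by
      simpa using ((hasDerivAt_id x).const_mul 2).const_sub 1
    have total := ((dl1.sub dl2).const_mul (-(1/(25*s)))).add (dlin.mul dq)
    have hprod : (x-(1-s)/2) * ((s+1)/2-x) = 1+x-x^2 := by linear_combination hs/4
    have hadd : 1/(x-(1-s)/2) - (-1)/((s+1)/2-x) = s/(1+x-x^2) := by
      rw [div_sub_div _ _ ha.ne' hb.ne', ← hprod]
      congr 1
      ring
    rw [hadd] at total
    convert total using 1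
    · exact rfl
    · exact rfl
    · exact rfl
    simp only [Pi.add_apply, Pi.sub_apply]
    field_simp
    ring
  have hcd : ∀ c : ℝ, ∀ k : ℕ, ContinuousOn (fun x : ℝ => c/(1+x-x^2)^k) (Set.uIcc (0:ℝ) 1) :=
    fun c k => ContinuousOn.div continuousOn_const (by fun_prop)
      (fun x hx => pow_ne_zero _ (hwpos x hx).ne')
  have hint : IntervalIntegrable (fun t : ℝ =>
      (t - t^2) * (12/(1+t-t^2)^4 - 10/(1+t-t^2)^3 + 1/(1+t-t^2)^2)) volume 0 1 := by
    apply ContinuousOn.intervalIntegrable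
    exact (by fun_prop : ContinuousOn (fun t : ℝ => t - t^2) _).mul
      (((hcd 12 4).sub (hcd 10 3)).add (hcd 1 2))
  have key := intervalIntegral.integral_eq_sub_of_hasDerivAt hderiv hint
  rw [key, hHdef]
  simp only []
  have hs1 : s + 1 ≠ 0 := by positivity
  have hlog : Real.log ((0:ℝ) - (1-s)/2) = - Real.log ((s+1)/2 - 0) := by
    rw [← Real.log_inv]
    congr 1
    exact eq_inv_of_mul_eq_one_left (by linear_combination hs/4)
  have hlog2 : Real.log ((s+1)/2 - 1) = - Real.log ((1:ℝ) - (1-s)/2) := by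
    rw [← Real.log_inv]
    congr 1
    exact eq_inv_of_mul_eq_one_left (by linear_combination hs/4)
  rw [hlog, hlog2]
  have h1 : (1:ℝ) - (1-s)/2 = (s+1)/2 := by ring
  have h2 : (s+1)/2 - (0:ℝ) = (s+1)/2 := by ring
  rw [h1, h2]
  have : ((1:ℝ)+1-1^2) = 1 := by norm_num
  rw [this]
  have : ((1:ℝ)+0-0^2) = 1 := by norm_num
  rw [this]
  field_simp
  linear_combination (500 * Real.log ((s+1)/2)) * hs

lemma fact_succ_cast (n : ℕ) :
    ((2*(n+1)+1).factorial : ℝ) = (2*(n:ℝ)+3) * ((2*(n+1)).factorial : ℝ) := by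
  rw [show 2*(n+1)+1 = (2*(n+1)) + 1 by ring, Nat.factorial_succ]
  push_cast
  ring

lemma int_F (n : ℕ) : (∫ t in Set.Ioc (0:ℝ) 1,
      (-1:ℝ)^n * ((n:ℝ)+1)^2 * (2*(n:ℝ)+3) * (t*(1-t))^(n+1))
    = (-1:ℝ)^n * ((n:ℝ)+1)^2 * ((n+1).factorial : ℝ)^2 / ((2*(n+1)).factorial : ℝ) := by
  rw [← intervalIntegral.integral_of_le zero_le_one]
  simp_rw [mul_pow]
  rw [intervalIntegral.integral_const_mul, beta_nat (n+1), fact_succ_cast n]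
  have h0 : ((2*(n+1)).factorial : ℝ) ≠ 0 := by
    exact_mod_cast (Nat.factorial_pos _).ne'
  have h1 : (2*(n:ℝ)+3) ≠ 0 := by positivity
  field_simp

lemma int_normF (n : ℕ) : (∫ t in Set.Ioc (0:ℝ) 1,
      ‖(-1:ℝ)^n * ((n:ℝ)+1)^2 * (2*(n:ℝ)+3) * (t*(1-t))^(n+1)‖)
    = ((n:ℝ)+1)^2 * (2*(n:ℝ)+3) * (((n+1).factorial : ℝ)^2 / ((2*(n+1)+1).factorial : ℝ)) := by
  rw [setIntegral_congr_fun measurableSet_Ioc (g := fun t : ℝ =>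
      ((n:ℝ)+1)^2 * (2*(n:ℝ)+3) * (t*(1-t))^(n+1)) ?_]
  · rw [← intervalIntegral.integral_of_le zero_le_one]
    simp_rw [mul_pow]
    rw [intervalIntegral.integral_const_mul, beta_nat (n+1)]
  · intro t ht
    have hpos : (0:ℝ) ≤ t*(1-t) := by nlinarith [ht.1.le, ht.2]
    show ‖(-1:ℝ)^n * ((n:ℝ)+1)^2 * (2*(n:ℝ)+3) * (t*(1-t))^(n+1)‖
      = ((n:ℝ)+1)^2 * (2*(n:ℝ)+3) * (t*(1-t))^(n+1)
    rw [Real.norm_eq_abs, abs_mul, abs_mul, abs_mul, abs_pow, abs_neg, abs_one, one_pow,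
      one_mul, abs_of_nonneg (by positivity : (0:ℝ) ≤ ((n:ℝ)+1)^2),
      abs_of_nonneg (by positivity : (0:ℝ) ≤ 2*(n:ℝ)+3),
      abs_of_nonneg (pow_nonneg hpos _)]

lemma summable_normF : Summable (fun n : ℕ =>
    ((n:ℝ)+1)^2 * (2*(n:ℝ)+3) * (((n+1).factorial : ℝ)^2 / ((2*(n+1)+1).factorial : ℝ))) := by
  have base : Summable (fun n : ℕ => (n:ℝ)^2 * (1/2:ℝ)^n) :=
    summable_pow_mul_geometric_of_norm_lt_one 2 (by rw [Real.norm_eq_abs, abs_of_nonneg] <;> norm_num)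
  have shifted : Summable (fun n : ℕ => ((n:ℝ)+1)^2 * (1/2:ℝ)^(n+1)) := by
    have h := base.comp_injective (add_left_injective 1)
    refine h.congr fun n => ?_
    simp only [Function.comp_apply]
    push_cast
    ring
  refine Summable.of_nonneg_of_le (fun n => by positivity) (fun n => ?_) shifted
  have hA : ((n+1).factorial : ℝ)^2 * 2^(n+1) ≤ ((2*(n+1)).factorial : ℝ) := by
    exact_mod_cast fact_bound (n+1)
  have hBpos : (0:ℝ) < ((2*(n+1)).factorial : ℝ) := by
    exact_mod_cast Nat.factorial_pos _
  have h2p : (0:ℝ) < (2:ℝ)^(n+1) := by positivity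
  have heq : ((n:ℝ)+1)^2 * (2*(n:ℝ)+3) * (((n+1).factorial : ℝ)^2 / ((2*(n+1)+1).factorial : ℝ))
      = ((n:ℝ)+1)^2 * (((n+1).factorial : ℝ)^2 / ((2*(n+1)).factorial : ℝ)) := by
    rw [fact_succ_cast n]
    have h1 : (2*(n:ℝ)+3) ≠ 0 := by positivity
    field_simp
  rw [heq]
  have hdiv : ((n+1).factorial : ℝ)^2 / ((2*(n+1)).factorial : ℝ) ≤ (1/2:ℝ)^(n+1) := by
    rw [div_le_iff₀ hBpos, div_pow, one_pow, div_mul_eq_mul_div, le_div_iff₀ h2p, one_mul]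
    linarith
  exact mul_le_mul_of_nonneg_left hdiv (by positivity)

/-- ∑_{n=1}^∞ (-1)^{n-1}·n²·(n!)²/(2n)! converges and equals
(4/125)·(5 − √5·log((√5 + 1)/2)). -/
theorem apelblat_corrected_40 :
    HasSum (fun n : ℕ =>
      (-1 : ℝ) ^ n * ((n : ℝ) + 1) ^ 2 * (Nat.factorial (n + 1) : ℝ) ^ 2 /
        (Nat.factorial (2 * (n + 1)) : ℝ))
      (4 / 125 * (5 - Real.sqrt 5 * Real.log ((Real.sqrt 5 + 1) / 2))) := by
  set F : ℕ → ℝ → ℝ := fun n t => (-1:ℝ)^n * ((n:ℝ)+1)^2 * (2*(n:ℝ)+3) * (t*(1-t))^(n+1)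
    with hFdef
  have hcont : ∀ n, Continuous (F n) := fun n => by fun_prop
  have hF_int : ∀ n, Integrable (F n) (volume.restrict (Set.Ioc (0:ℝ) 1)) :=
    fun n => (hcont n).integrableOn_Ioc
  have hsum : Summable (fun n => ∫ t in Set.Ioc (0:ℝ) 1, ‖F n t‖) := by
    refine summable_normF.congr fun n => ?_
    exact (int_normF n).symm
  have main := hasSum_integral_of_summable_integral_norm hF_int hsum
  have hfn : (∫ a in Set.Ioc (0:ℝ) 1, F · a) = (fun n : ℕ =>
      (-1 : ℝ) ^ n * ((n : ℝ) + 1) ^ 2 * (Nat.factorial (n + 1) : ℝ) ^ 2 /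
        (Nat.factorial (2 * (n + 1)) : ℝ)) := by
    funext n
    exact int_F n
  rw [hfn] at main
  have hval : (∫ a in Set.Ioc (0:ℝ) 1, ∑' n, F n a)
      = 4 / 125 * (5 - Real.sqrt 5 * Real.log ((Real.sqrt 5 + 1) / 2)) := by
    rw [setIntegral_congr_fun measurableSet_Ioc (g := fun t : ℝ =>
        (t - t^2) * (12/(1+t-t^2)^4 - 10/(1+t-t^2)^3 + 1/(1+t-t^2)^2))
      (fun t ht => (pointwise ht.1.le ht.2).tsum_eq)]
    rw [← intervalIntegral.integral_of_le zero_le_one]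
    exact ftc_eval
  rw [hval] at main
  exact main
end

section
/- For every real number x with |x| ≤ 1, the series ∑_{m=1}^∞ (2x)^{2m} / (m² · C(2m, m)) converges and equals 2 · (arcsin x)². -/
open Real Set Filter Topology


noncomputable def lehC (n : ℕ) : ℝ := 4 ^ n / ((2 * n + 1 : ℝ) * (Nat.centralBinom n : ℝ))
noncomputable def lehD (n : ℕ) : ℝ := 4 ^ n / (Nat.centralBinom n : ℝ)
noncomputable def lehB (m : ℕ) : ℝ :=
  4 ^ (m + 1) / (((m : ℝ) + 1) ^ 2 * (Nat.centralBinom (m + 1) : ℝ))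

lemma cb_pos (n : ℕ) : (0 : ℝ) < (Nat.centralBinom n : ℝ) := by
  exact_mod_cast Nat.centralBinom_pos n

lemma lehC_pos (n : ℕ) : 0 < lehC n := by
  apply div_pos (by positivity)
  exact mul_pos (by positivity) (cb_pos n)

lemma lehC_le_one (n : ℕ) : lehC n ≤ 1 := by
  rw [lehC, div_le_one (mul_pos (by positivity) (cb_pos n))]
  have : (4 : ℕ) ^ n ≤ (2 * n + 1) * Nat.centralBinom n := by
    rcases Nat.eq_zero_or_pos n with rfl | hn
    · simp [Nat.centralBinom_zero]
    · calc (4:ℕ)^n ≤ 2 * n * Nat.centralBinom n :=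
            Nat.four_pow_le_two_mul_self_mul_centralBinom n hn
        _ ≤ (2 * n + 1) * Nat.centralBinom n := by
            exact Nat.mul_le_mul_right _ (Nat.le_succ _)
  calc (4:ℝ)^n = ((4^n : ℕ) : ℝ) := by push_cast; ring
    _ ≤ (((2*n+1) * Nat.centralBinom n : ℕ) : ℝ) := by exact_mod_cast this
    _ = (2*n+1 : ℝ) * Nat.centralBinom n := by push_cast; ring

lemma lehD_le (n : ℕ) : lehD n ≤ 2 * n + 1 := by
  have h := lehC_le_one n
  rw [lehC, div_le_one (mul_pos (by positivity) (cb_pos n))] at h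
  rw [lehD, div_le_iff₀ (cb_pos n)]
  calc (4:ℝ)^n ≤ (2*n+1:ℝ) * Nat.centralBinom n := h
    _ = (2*n+1:ℝ) * Nat.centralBinom n := rfl
  
lemma succ_cb (n : ℕ) :
    ((n : ℝ) + 1) * (Nat.centralBinom (n + 1) : ℝ) = 2 * (2 * n + 1) * Nat.centralBinom n := by
  have := Nat.succ_mul_centralBinom_succ n
  exact_mod_cast this

lemma lehD_succ (n : ℕ) : lehD (n + 1) = lehD n + lehC n := by
  have h1 := succ_cb n
  have h2 := cb_pos n
  have h3 := cb_pos (n + 1)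
  rw [lehD, lehD, lehC]
  have hn1 : (0:ℝ) < (n:ℝ) + 1 := by positivity
  have h21 : (0:ℝ) < 2 * (n:ℝ) + 1 := by positivity
  have hC' : (Nat.centralBinom (n+1) : ℝ) = 2*(2*(n:ℝ)+1)*Nat.centralBinom n / ((n:ℝ)+1) := by
    rw [eq_div_iff hn1.ne']; linarith [succ_cb n]
  rw [hC']
  field_simp
  ring

lemma lehB_deriv_coeff (m : ℕ) : lehB m * (2 * (m + 1)) = 4 * lehC m := by
  have h1 := succ_cb m
  have h2 := cb_pos m
  have h3 := cb_pos (m + 1)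
  rw [lehB, lehC]
  have hn1 : (0:ℝ) < (m:ℝ) + 1 := by positivity
  have h21 : (0:ℝ) < 2 * (m:ℝ) + 1 := by positivity
  have hC' : (Nat.centralBinom (m+1) : ℝ) = 2*(2*(m:ℝ)+1)*Nat.centralBinom m / ((m:ℝ)+1) := by
    rw [eq_div_iff hn1.ne']; linarith [succ_cb m]
  rw [hC']
  field_simp
  ring

lemma nat_bound (m : ℕ) :
    16 ^ (m + 1) * (m + 1) ≤ (2 * (m + 1) * Nat.centralBinom (m + 1)) ^ 2 := by
  induction m with
  | zero => simp [Nat.centralBinom]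
  | succ m ih =>
    have hrec := Nat.succ_mul_centralBinom_succ (m + 1)
    set C := Nat.centralBinom (m + 1) with hC
    have ih' : 16 ^ (m + 1) ≤ 4 * (m + 1) * C ^ 2 := by
      have : 16 ^ (m + 1) * (m + 1) ≤ (4 * (m + 1) * C ^ 2) * (m + 1) := by
        calc 16 ^ (m+1) * (m+1) ≤ (2 * (m + 1) * C) ^ 2 := ih
          _ = (4 * (m + 1) * C ^ 2) * (m + 1) := by ring
      exact Nat.le_of_mul_le_mul_right this (Nat.succ_pos m)
    calc 16 ^ (m + 2) * (m + 2) = 16 ^ (m+1) * (16 * (m + 2)) := by ring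
      _ ≤ (4 * (m + 1) * C ^ 2) * (16 * (m + 2)) := Nat.mul_le_mul_right _ ih'
      _ ≤ 16 * (2 * (m+1) + 1)^2 * C ^ 2 := by nlinarith [sq_nonneg C]
      _ = (2 * (2 * (m + 1) + 1) * C) ^ 2 * 4 := by ring
      _ = ((m + 2) * Nat.centralBinom (m + 2)) ^ 2 * 4 := by rw [← hrec]
      _ = (2 * (m + 2) * Nat.centralBinom (m + 2)) ^ 2 := by ring

lemma lehB_le (m : ℕ) : lehB m ≤ 2 / (((m:ℝ) + 1) * Real.sqrt ((m:ℝ) + 1)) := by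
  have h1 : (0:ℝ) < (m:ℝ) + 1 := by positivity
  have hs : (0:ℝ) < Real.sqrt ((m:ℝ)+1) := Real.sqrt_pos.2 h1
  have hkey : (4:ℝ) ^ (m+1) * Real.sqrt ((m:ℝ)+1) ≤ 2 * ((m:ℝ)+1) * Nat.centralBinom (m+1) := by
    have hn : ((16:ℝ) ^ (m+1) * ((m:ℝ)+1)) ≤ ((2 * ((m:ℝ)+1) * Nat.centralBinom (m+1)))^2 := by
      have := nat_bound m; exact_mod_cast this
    have := Real.sqrt_le_sqrt hn
    rwa [Real.sqrt_mul (by positivity), Real.sqrt_sq (by positivity),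
      show ((16:ℝ)^(m+1)) = ((4:ℝ)^(m+1))^2 by rw [← pow_mul, mul_comm (m+1) 2, pow_mul]; norm_num, Real.sqrt_sq (by positivity)] at this
  rw [lehB, div_le_div_iff₀ (mul_pos (by positivity) (cb_pos (m+1))) (by positivity)]
  calc (4:ℝ)^(m+1) * (((m:ℝ)+1) * Real.sqrt ((m:ℝ)+1))
      = ((4:ℝ)^(m+1) * Real.sqrt ((m:ℝ)+1)) * (((m:ℝ)+1)) := by ring
    _ ≤ (2 * ((m:ℝ)+1) * Nat.centralBinom (m+1)) * ((m:ℝ)+1) := by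
        exact mul_le_mul_of_nonneg_right hkey h1.le
    _ = 2 * (((m:ℝ)+1)^2 * Nat.centralBinom (m+1)) := by ring

lemma summable_bound : Summable (fun m : ℕ => 2 / (((m:ℝ) + 1) * Real.sqrt ((m:ℝ) + 1))) := by
  have h : Summable (fun n : ℕ => 1 / (n:ℝ) ^ (3/2 : ℝ)) :=
    (Real.summable_one_div_nat_rpow).2 (by norm_num)
  have h2 := (summable_nat_add_iff 1).2 h
  apply (h2.mul_left 2).congr
  intro m
  have h1 : (0:ℝ) < (m:ℝ) + 1 := by positivity
  rw [Real.sqrt_eq_rpow]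
  rw [show ((m:ℝ)+1) * ((m:ℝ)+1) ^ (1/2:ℝ) = ((m:ℝ)+1) ^ (3/2:ℝ) by
    rw [show (3/2:ℝ) = 1 + 1/2 by norm_num, Real.rpow_add h1, Real.rpow_one]]
  push_cast
  ring

noncomputable def lehS (x : ℝ) : ℝ := ∑' n : ℕ, lehC n * x ^ (2 * n + 1)
noncomputable def lehF (x : ℝ) : ℝ := ∑' m : ℕ, lehB m * x ^ (2 * (m + 1))


lemma lehD_pos (n : ℕ) : 0 < lehD n := div_pos (by positivity) (cb_pos n)

lemma lehB_pos (m : ℕ) : 0 < lehB m :=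
  div_pos (by positivity) (mul_pos (by positivity) (cb_pos (m+1)))

lemma lehC_mul (n : ℕ) : lehC n * (2 * n + 1) = lehD n := by
  rw [lehC, lehD]
  have h : ((2:ℝ) * n + 1) ≠ 0 := by positivity
  have hC := (cb_pos n).ne'
  field_simp

lemma summable_D_aux {r : ℝ} (hr0 : 0 ≤ r) (hr : r < 1) :
    Summable (fun n : ℕ => (2 * (n:ℝ) + 1) * r ^ (2 * n)) := by
  have hr2 : ‖r ^ 2‖ < 1 := by
    rw [Real.norm_eq_abs, abs_of_nonneg (by positivity)]
    nlinarith
  have h1 : Summable (fun n : ℕ => (n : ℝ) ^ 1 * (r^2) ^ n) :=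
    summable_pow_mul_geometric_of_norm_lt_one 1 hr2
  have h2 : Summable (fun n : ℕ => (r^2) ^ n) := summable_geometric_of_norm_lt_one hr2
  apply ((h1.mul_left 2).add h2).congr
  intro n
  rw [← pow_mul]
  push_cast
  ring

lemma summable_SD {y : ℝ} (hy : |y| < 1) :
    Summable (fun n : ℕ => lehD n * y ^ (2 * n)) := by
  apply (summable_D_aux (abs_nonneg y) hy).of_norm_bounded
  intro n
  rw [norm_mul, norm_pow, Real.norm_eq_abs, Real.norm_eq_abs, abs_of_pos (lehD_pos n)]
  exact mul_le_mul_of_nonneg_right (lehD_le n) (by positivity)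

lemma summable_S {y : ℝ} (hy : |y| < 1) :
    Summable (fun n : ℕ => lehC n * y ^ (2 * n + 1)) := by
  apply ((summable_D_aux (abs_nonneg y) hy).mul_right |y|).of_norm_bounded
  intro n
  rw [norm_mul, norm_pow, Real.norm_eq_abs, Real.norm_eq_abs, abs_of_pos (lehC_pos n),
    pow_succ]
  have h1 : lehC n ≤ 2 * (n:ℝ) + 1 := (lehC_le_one n).trans (by nlinarith [Nat.cast_nonneg (α := ℝ) n])
  calc lehC n * (|y|^(2*n) * |y|) ≤ (2*(n:ℝ)+1) * (|y|^(2*n)*|y|) :=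
        mul_le_mul_of_nonneg_right h1 (by positivity)
    _ = (2*(n:ℝ)+1) * |y|^(2*n)*|y| := by ring

lemma hasDerivAt_lehS {x : ℝ} (hx : |x| < 1) :
    HasDerivAt lehS (∑' n : ℕ, lehD n * x ^ (2 * n)) x := by
  set r : ℝ := (1 + |x|) / 2 with hr
  have hxr : |x| < r := by rw [hr]; linarith
  have hr1 : r < 1 := by rw [hr]; linarith
  have hr0 : 0 ≤ r := le_trans (abs_nonneg x) hxr.le
  apply hasDerivAt_tsum_of_isPreconnected
    (u := fun n : ℕ => (2 * (n:ℝ) + 1) * r ^ (2 * n))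
    (t := Ioo (-r) r) (y₀ := 0)
    (g' := fun n y => lehD n * y ^ (2 * n))
    (summable_D_aux hr0 hr1) isOpen_Ioo (convex_Ioo _ _).isPreconnected
  · intro n y _
    have h := ((hasDerivAt_pow (2 * n + 1) y).const_mul (lehC n))
    refine h.congr_deriv ?_
    rw [Nat.add_sub_cancel]
    rw [← lehC_mul n]
    push_cast
    ring
  · intro n y hy
    have hyr : |y| ≤ r := by
      rw [abs_le]; exact ⟨hy.1.le, hy.2.le⟩
    rw [Real.norm_eq_abs, abs_mul, abs_of_pos (lehD_pos n), abs_pow]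
    exact mul_le_mul (lehD_le n) (pow_le_pow_left₀ (abs_nonneg y) hyr _) (by positivity)
      (by positivity)
  · exact ⟨by linarith [abs_nonneg x], by linarith [abs_nonneg x]⟩
  · apply summable_zero.congr
    intro n
    simp [zero_pow (by omega : 2 * n + 1 ≠ 0)]
  · rwa [Set.mem_Ioo, ← abs_lt]

lemma hasDerivAt_lehF {x : ℝ} (hx : |x| < 1) :
    HasDerivAt lehF (4 * lehS x) x := by
  set r : ℝ := (1 + |x|) / 2 with hr
  have hxr : |x| < r := by rw [hr]; linarith
  have hr1 : r < 1 := by rw [hr]; linarith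
  have hr0 : 0 ≤ r := le_trans (abs_nonneg x) hxr.le
  have hu : Summable (fun m : ℕ => 4 * r ^ (2 * m + 1)) := by
    have h2 : ‖r ^ 2‖ < 1 := by
      rw [Real.norm_eq_abs, abs_of_nonneg (by positivity)]; nlinarith
    apply (((summable_geometric_of_norm_lt_one h2).mul_left (4 * r))).congr
    intro n
    rw [← pow_mul, pow_succ]
    ring
  have key : HasDerivAt lehF (∑' m : ℕ, 4 * lehC m * x ^ (2 * m + 1)) x := by
    apply hasDerivAt_tsum_of_isPreconnected
      (u := fun m : ℕ => 4 * r ^ (2 * m + 1))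
      (t := Ioo (-r) r) (y₀ := 0)
      (g' := fun m y => 4 * lehC m * y ^ (2 * m + 1))
      hu isOpen_Ioo (convex_Ioo _ _).isPreconnected
    · intro m y _
      have h := ((hasDerivAt_pow (2 * (m + 1)) y).const_mul (lehB m))
      refine h.congr_deriv ?_
      have he : 2 * (m + 1) - 1 = 2 * m + 1 := by omega
      rw [he, ← lehB_deriv_coeff m]
      push_cast
      ring
    · intro m y hy
      have hyr : |y| ≤ r := by rw [abs_le]; exact ⟨hy.1.le, hy.2.le⟩
      rw [Real.norm_eq_abs, abs_mul, abs_mul, abs_of_nonneg (by norm_num : (0:ℝ) ≤ 4),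
        abs_of_pos (lehC_pos m), abs_pow]
      calc 4 * lehC m * |y| ^ (2*m+1) ≤ 4 * 1 * r ^ (2*m+1) := by
            apply mul_le_mul (by nlinarith [lehC_le_one m])
              (pow_le_pow_left₀ (abs_nonneg y) hyr _) (by positivity) (by norm_num)
        _ = 4 * r ^ (2*m+1) := by ring
    · exact ⟨by linarith [abs_nonneg x], by linarith [abs_nonneg x]⟩
    · apply summable_zero.congr
      intro m
      simp [zero_pow (by omega : 2 * (m+1) ≠ 0)]
    · rwa [Set.mem_Ioo, ← abs_lt]
  convert key using 1
  rw [lehS, ← tsum_mul_left]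
  congr 1
  funext n
  ring

lemma key_identity {y : ℝ} (hy : |y| < 1) :
    (1 - y ^ 2) * (∑' n : ℕ, lehD n * y ^ (2 * n)) = 1 + y * lehS y := by
  have hD := (summable_SD hy).hasSum
  have hS := (summable_S hy).hasSum
  set D := ∑' n : ℕ, lehD n * y ^ (2 * n)
  set S := lehS y
  have hD2 : HasSum (fun n : ℕ => lehD n * y ^ (2 * n) * y ^ 2) (D * y ^ 2) :=
    hD.mul_right _
  have hS2 : HasSum (fun n : ℕ => lehC n * y ^ (2 * n + 1) * y) (S * y) := hS.mul_right _
  have hfun : (fun n : ℕ => lehD (n+1) * y^(2*(n+1)))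
      = fun n : ℕ => lehD n * y ^ (2 * n) * y ^ 2 + lehC n * y ^ (2 * n + 1) * y :=
    funext fun n => by rw [lehD_succ]; ring
  have hsum : HasSum (fun n : ℕ => lehD (n + 1) * y ^ (2 * (n + 1))) (D * y ^ 2 + S * y) := by
    rw [hfun]; exact hD2.add hS2
  have hshift : HasSum (fun n : ℕ => lehD (n + 1) * y ^ (2 * (n + 1))) (D - 1) := by
    have h1 : HasSum (fun n : ℕ => lehD n * y ^ (2 * n)) ((D - 1) + ∑ i ∈ Finset.range 1, lehD i * y ^ (2 * i)) := by
      have heq : (D - 1) + ∑ i ∈ Finset.range 1, lehD i * y ^ (2 * i) = D := by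
        simp [lehD, Nat.centralBinom_zero]
      rw [heq]; exact hD
    exact (hasSum_nat_add_iff (f := fun n : ℕ => lehD n * y ^ (2 * n)) 1).mpr h1
  have := hsum.unique hshift
  linarith

lemma eq_zero_of_deriv_zero {f : ℝ → ℝ}
    (hf : ∀ y ∈ Ioo (-1 : ℝ) 1, HasDerivAt f 0 y) (hf0 : f 0 = 0)
    {x : ℝ} (hx : x ∈ Ioo (-1 : ℝ) 1) : f x = 0 := by
  rcases le_total 0 x with h | h
  · have hmem : ∀ y ∈ Icc (0:ℝ) x, y ∈ Ioo (-1:ℝ) 1 := fun y hy =>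
      ⟨lt_of_lt_of_le (by norm_num) hy.1, lt_of_le_of_lt hy.2 hx.2⟩
    have := constant_of_has_deriv_right_zero
      (f := f) (a := 0) (b := x)
      (fun y hy => (hf y (hmem y hy)).continuousAt.continuousWithinAt)
      (fun y hy => (hf y (hmem y (Ico_subset_Icc_self hy))).hasDerivWithinAt)
      x (right_mem_Icc.2 h)
    rw [this, hf0]
  · have hmem : ∀ y ∈ Icc x (0:ℝ), y ∈ Ioo (-1:ℝ) 1 := fun y hy =>
      ⟨lt_of_lt_of_le hx.1 hy.1, lt_of_le_of_lt hy.2 (by norm_num)⟩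
    have := constant_of_has_deriv_right_zero
      (f := f) (a := x) (b := 0)
      (fun y hy => (hf y (hmem y hy)).continuousAt.continuousWithinAt)
      (fun y hy => (hf y (hmem y (Ico_subset_Icc_self hy))).hasDerivWithinAt)
      0 (right_mem_Icc.2 h)
    rw [← hf0, this]

lemma lehS_zero : lehS 0 = 0 := by
  rw [lehS]
  convert tsum_zero with n
  simp [zero_pow (by omega : 2 * n + 1 ≠ 0)]

lemma lehS_eq {x : ℝ} (hx : |x| < 1) :
    Real.sqrt (1 - x ^ 2) * lehS x = Real.arcsin x := by
  set G : ℝ → ℝ := fun y => Real.sqrt (1 - y ^ 2) * lehS y - Real.arcsin y with hG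
  have hGd : ∀ y ∈ Ioo (-1 : ℝ) 1, HasDerivAt G 0 y := by
    intro y hy
    have hy1 : |y| < 1 := abs_lt.2 ⟨hy.1, hy.2⟩
    have hy2 : 0 < 1 - y ^ 2 := by nlinarith [abs_lt.1 hy1]
    have hs0 : 0 < Real.sqrt (1 - y ^ 2) := Real.sqrt_pos.2 hy2
    have h1 : HasDerivAt (fun z : ℝ => 1 - z ^ 2) (-(2 * y ^ 1)) y :=
      (hasDerivAt_pow 2 y).const_sub 1
    have h2 : HasDerivAt (fun z : ℝ => Real.sqrt (1 - z ^ 2))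
        (-(2 * y ^ 1) / (2 * Real.sqrt (1 - y ^ 2))) y := h1.sqrt hy2.ne'
    have h3 : HasDerivAt lehS (∑' n : ℕ, lehD n * y ^ (2 * n)) y := hasDerivAt_lehS hy1
    have h4 : HasDerivAt Real.arcsin (1 / Real.sqrt (1 - y ^ 2)) y :=
      Real.hasDerivAt_arcsin (by linarith [hy.1]) (by linarith [hy.2])
    have h5 := (h2.mul h3).sub h4
    refine h5.congr_deriv ?_
    symm
    set D := ∑' n : ℕ, lehD n * y ^ (2 * n)
    have hkey : (1 - y ^ 2) * D = 1 + y * lehS y := key_identity hy1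
    have hsq : Real.sqrt (1 - y ^ 2) ^ 2 = 1 - y ^ 2 := Real.sq_sqrt hy2.le
    field_simp
    linear_combination (-D) * hsq - hkey
  have hG0 : G 0 = 0 := by
    simp [hG, lehS_zero, Real.arcsin_zero]
  have hGx : G x = 0 := eq_zero_of_deriv_zero hGd hG0 ⟨(abs_lt.1 hx).1, (abs_lt.1 hx).2⟩
  have h' : Real.sqrt (1 - x ^ 2) * lehS x - Real.arcsin x = 0 := hGx
  linarith

lemma lehF_zero : lehF 0 = 0 := by
  rw [lehF]
  convert tsum_zero with m
  simp [zero_pow (by omega : 2 * (m + 1) ≠ 0)]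

lemma lehF_eq_Ioo {x : ℝ} (hx : |x| < 1) : lehF x = 2 * Real.arcsin x ^ 2 := by
  set H : ℝ → ℝ := fun y => lehF y - 2 * Real.arcsin y ^ 2 with hH
  have hHd : ∀ y ∈ Ioo (-1 : ℝ) 1, HasDerivAt H 0 y := by
    intro y hy
    have hy1 : |y| < 1 := abs_lt.2 ⟨hy.1, hy.2⟩
    have hy2 : 0 < 1 - y ^ 2 := by nlinarith [abs_lt.1 hy1]
    have hs0 : 0 < Real.sqrt (1 - y ^ 2) := Real.sqrt_pos.2 hy2
    have h1 : HasDerivAt lehF (4 * lehS y) y := hasDerivAt_lehF hy1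
    have h4 : HasDerivAt Real.arcsin (1 / Real.sqrt (1 - y ^ 2)) y :=
      Real.hasDerivAt_arcsin (by linarith [hy.1]) (by linarith [hy.2])
    have h2 : HasDerivAt (fun z : ℝ => 2 * Real.arcsin z ^ 2)
        (2 * (2 * Real.arcsin y ^ 1 * (1 / Real.sqrt (1 - y ^ 2)))) y :=
      (h4.pow 2).const_mul 2
    have h5 := h1.sub h2
    refine h5.congr_deriv ?_
    symm
    have hseq : Real.sqrt (1 - y ^ 2) * lehS y = Real.arcsin y := lehS_eq hy1
    field_simp
    nlinarith [hseq, hs0]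
  have hH0 : H 0 = 0 := by simp [hH, lehF_zero, Real.arcsin_zero]
  have hHx : H x = 0 := eq_zero_of_deriv_zero hHd hH0 ⟨(abs_lt.1 hx).1, (abs_lt.1 hx).2⟩
  have h' : lehF x - 2 * Real.arcsin x ^ 2 = 0 := hHx
  linarith

lemma summable_F {x : ℝ} (hx : |x| ≤ 1) :
    Summable (fun m : ℕ => lehB m * x ^ (2 * (m + 1))) := by
  apply summable_bound.of_norm_bounded
  intro m
  rw [norm_mul, norm_pow, Real.norm_eq_abs, Real.norm_eq_abs, abs_of_pos (lehB_pos m)]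
  calc lehB m * |x| ^ (2 * (m + 1)) ≤ lehB m * 1 := by
        apply mul_le_mul_of_nonneg_left _ (lehB_pos m).le
        exact pow_le_one₀ (abs_nonneg x) hx
    _ = lehB m := mul_one _
    _ ≤ 2 / (((m:ℝ) + 1) * Real.sqrt ((m:ℝ) + 1)) := lehB_le m

lemma lehF_continuousOn : ContinuousOn lehF (Icc (-1 : ℝ) 1) := by
  have h := tendstoUniformlyOn_tsum (f := fun (m : ℕ) (x : ℝ) => lehB m * x ^ (2 * (m + 1)))
    summable_bound (s := Icc (-1 : ℝ) 1) ?_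
  · exact h.continuousOn (Filter.Eventually.of_forall fun t =>
      continuousOn_finset_sum t fun m _ =>
        (continuous_const.mul (continuous_pow _)).continuousOn).frequently
  · intro m y hy
    have hy1 : |y| ≤ 1 := abs_le.2 ⟨hy.1, hy.2⟩
    rw [norm_mul, norm_pow, Real.norm_eq_abs, Real.norm_eq_abs, abs_of_pos (lehB_pos m)]
    calc lehB m * |y| ^ (2 * (m + 1)) ≤ lehB m * 1 :=
          mul_le_mul_of_nonneg_left (pow_le_one₀ (abs_nonneg y) hy1) (lehB_pos m).le
      _ = lehB m := mul_one _
      _ ≤ 2 / (((m:ℝ) + 1) * Real.sqrt ((m:ℝ) + 1)) := lehB_le m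

lemma lehF_eq {x : ℝ} (hx : |x| ≤ 1) : lehF x = 2 * Real.arcsin x ^ 2 := by
  rcases lt_or_eq_of_le hx with h | h
  · exact lehF_eq_Ioo h
  · have hmem : x ∈ Icc (-1 : ℝ) 1 := abs_le.1 hx
    have hne : (𝓝[Ioo (-1 : ℝ) 1] x).NeBot := by
      rcases (abs_eq (by norm_num : (0:ℝ) ≤ 1)).1 h with rfl | rfl
      · rw [nhdsWithin_Ioo_eq_nhdsLT (by norm_num : (-1:ℝ) < 1)]
        infer_instance
      · rw [nhdsWithin_Ioo_eq_nhdsGT (by norm_num : (-1:ℝ) < 1)]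
        infer_instance
    have h1 : Tendsto lehF (𝓝[Ioo (-1 : ℝ) 1] x) (𝓝 (lehF x)) :=
      (lehF_continuousOn.continuousWithinAt hmem).mono_left
        (nhdsWithin_mono _ Ioo_subset_Icc_self)
    have h2 : Tendsto (fun y => 2 * Real.arcsin y ^ 2) (𝓝[Ioo (-1 : ℝ) 1] x)
        (𝓝 (2 * Real.arcsin x ^ 2)) :=
      ((continuous_const.mul (Real.continuous_arcsin.pow 2)).tendsto x).mono_left nhdsWithin_le_nhds
    have heq : Tendsto lehF (𝓝[Ioo (-1 : ℝ) 1] x) (𝓝 (2 * Real.arcsin x ^ 2)) := by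
      apply h2.congr'
      filter_upwards [self_mem_nhdsWithin] with y hy
      exact (lehF_eq_Ioo (abs_lt.2 ⟨hy.1, hy.2⟩)).symm
    exact tendsto_nhds_unique h1 heq

/-- Lehmer's equation (13): for every real x with |x| ≤ 1, the series
∑_{m=1}^∞ (2x)^{2m} / (m²·C(2m, m)) converges and equals 2·(arcsin x)². -/
theorem lehmer_eq13 (x : ℝ) (hx : |x| ≤ 1) :
    HasSum (fun m : ℕ =>
      (2 * x) ^ (2 * (m + 1)) /
        ((m + 1 : ℝ) ^ 2 * (Nat.choose (2 * (m + 1)) (m + 1) : ℝ)))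
      (2 * Real.arcsin x ^ 2) := by
  have hs := (summable_F hx).hasSum
  rw [show (∑' m : ℕ, lehB m * x ^ (2 * (m + 1))) = lehF x from rfl, lehF_eq hx] at hs
  have hfun : ∀ m : ℕ, (2 * x) ^ (2 * (m + 1)) /
      ((m + 1 : ℝ) ^ 2 * (Nat.choose (2 * (m + 1)) (m + 1) : ℝ))
      = lehB m * x ^ (2 * (m + 1)) := by
    intro m
    rw [lehB, mul_pow, show ((2:ℝ)) ^ (2 * (m + 1)) = 4 ^ (m + 1) by
      rw [pow_mul]; norm_num]
    simp only [Nat.centralBinom]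
    push_cast
    ring
  simpa only [hfun] using hs
end
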